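/- arXiv:1609.07206 — 3 statements merged into one kernel-verified Lean document; each statement's English description precedes it below -/
import Mathlib

section
/- For all x, y ∈ 𝔻 and the first extremal positive ('trim as you go') trimming operator T^{(1,+)}_{rim} defined by T^{(1,+)}_{rim}(x) := x − S_{+Δ}(x), one has ‖T^{(1,+)}_{rim}(x) − T^{(1,+)}_{rim}(y)‖ ≤ 3‖x − y‖; in particular T^{(1,+)}_{rim} is Lipschitz continuous in the supremum norm on 𝔻. -/
open Filter Topology Set unitInterval

noncomputable section

open scoped Classical

instance : Fact ((0:ℝ) ≤ 1) := ⟨zero_le_one⟩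

/-- The space `𝔻` of càdlàg functions on `[0,1]`: right-continuous everywhere with
finite left limits everywhere (conditions at the endpoints hold vacuously). -/
def Cadlag (x : I → ℝ) : Prop :=
  (∀ τ : I, Tendsto x (𝓝[>] τ) (𝓝 (x τ))) ∧ (∀ τ : I, ∃ l : ℝ, Tendsto x (𝓝[<] τ) (𝓝 l))

/-- The sup-norm `‖x‖ = sup_{0 ≤ τ ≤ 1} |x(τ)|`. -/
def dNorm (x : I → ℝ) : ℝ := ⨆ τ : I, |x τ|

/-- The jump `Δx(τ) = x(τ) - x(τ-)` of `x` at `τ`, with `Δx(0) := 0`. -/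
def jump (x : I → ℝ) (τ : I) : ℝ := if τ = 0 then 0 else x τ - Function.leftLim x τ

/-- The running supremum `S(x)(τ) = sup_{0 ≤ s ≤ τ} x(s)`. -/
def runSup (x : I → ℝ) (τ : I) : ℝ := sSup (x '' {s : I | s ≤ τ})

/-- The running absolute supremum `S̃(x)(τ) = sup_{0 ≤ s ≤ τ} |x(s)|`. -/
def runAbsSup (x : I → ℝ) (τ : I) : ℝ := sSup ((fun s => |x s|) '' {s : I | s ≤ τ})

/-- The largest positive jump `S_{+Δ}(x)(τ) = sup_{0 ≤ s ≤ τ} Δx(s)`. -/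
def posJumpSup (x : I → ℝ) (τ : I) : ℝ := sSup (jump x '' {s : I | s ≤ τ})

/-- The largest modulus jump `S̃_Δ(x)(τ) = sup_{0 ≤ s ≤ τ} |Δx(s)|`. -/
def modJumpSup (x : I → ℝ) (τ : I) : ℝ := sSup ((fun s => |jump x s|) '' {s : I | s ≤ τ})

/-- The first extremal positive trimming ("trim as you go") operator
`T^{(1,+)}_{rim}(x) = x - S_{+Δ}(x)`. -/
def trimPos (x : I → ℝ) : I → ℝ := fun τ => x τ - posJumpSup x τ

/-- `Λ`: continuous strictly increasing bijections of `[0,1]` fixing the endpoints. -/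
def IsTimeChange (l : I → I) : Prop := Continuous l ∧ StrictMono l ∧ l 0 = 0 ∧ l 1 = 1

/-- Convergence in the (strong) Skorokhod `J₁`-topology. -/
def J1Tendsto (xn : ℕ → I → ℝ) (x : I → ℝ) : Prop :=
  ∃ l : ℕ → I → I, (∀ n, IsTimeChange (l n)) ∧
    Tendsto (fun n => dNorm (fun τ => (l n τ : ℝ) - (τ : ℝ))) atTop (𝓝 0) ∧
    Tendsto (fun n => dNorm (fun τ => xn n (l n τ) - x τ)) atTop (𝓝 0)

/-- `Ã_τ(x)`: the times `s ∈ (0,τ]` of the largest modulus jump of `x` on `[0,τ]`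
(empty when `S̃_Δ(x)(τ) = 0`). -/
def tildeA (x : I → ℝ) (τ : I) : Set I :=
  {s : I | 0 < s ∧ s ≤ τ ∧ 0 < |jump x s| ∧ |jump x s| = modJumpSup x τ}

/-- `A⁺_τ(x)`: the times `s ∈ (0,τ]` of the largest positive jump of `x` on `[0,τ]`
(empty when `S_{+Δ}(x)(τ) = 0`). -/
def posA (x : I → ℝ) (τ : I) : Set I :=
  {s : I | 0 < s ∧ s ≤ τ ∧ 0 < jump x s ∧ jump x s = posJumpSup x τ}

/-- The signed largest-modulus ("trim as you go") trimmer `𝔗_rim`: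
`𝔗_rim(x)(τ) = x(τ) - Δx(L̃_τ(x))` if `Ã_τ(x) ≠ ∅`, `x(τ)` otherwise, where
`L̃_τ(x) = max Ã_τ(x)`. -/
def sgnModTrim (x : I → ℝ) : I → ℝ := fun τ =>
  if (tildeA x τ).Nonempty then x τ - jump x (sSup (tildeA x τ)) else x τ

/-- The record time ("lookback") trimmer:
`R_trim(x) = x - Δx(R₁(x))·1_{[R₁(x),1]}` if `A⁺₁(x) ≠ ∅`, `x` otherwise, where
`R₁(x) = min A⁺₁(x)`. -/
def recordTrim (x : I → ℝ) : I → ℝ := fun τ =>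
  if (posA x 1).Nonempty ∧ sInf (posA x 1) ≤ τ then x τ - jump x (sInf (posA x 1)) else x τ

/-- The modulus record time trimmer:
`R̃_trim(x) = x - Δx(R̃₁(x))·1_{[R̃₁(x),1]}` if `Ã₁(x) ≠ ∅`, `x` otherwise, where
`R̃₁(x) = min Ã₁(x)`. -/
def modRecordTrim (x : I → ℝ) : I → ℝ := fun τ =>
  if (tildeA x 1).Nonempty ∧ sInf (tildeA x 1) ≤ τ then x τ - jump x (sInf (tildeA x 1)) else x τ



lemma cadlag_bounded (x : I → ℝ) (hx : Cadlag x) : ∃ M : ℝ, ∀ τ : I, |x τ| ≤ M := by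
  have hloc : ∀ τ : I, ∃ M : ℝ, ∀ᶠ s in 𝓝 τ, |x s| ≤ M := by
    intro τ
    obtain ⟨l, hl⟩ := hx.2 τ
    refine ⟨max (|l| + 1) (|x τ| + 1), ?_⟩
    have hnhds : 𝓝 τ = 𝓝[<] τ ⊔ (pure τ ⊔ 𝓝[>] τ) := by
      conv_lhs => rw [← nhdsWithin_univ, ← Iio_union_Ici, nhdsWithin_union,
        show Ici τ = insert τ (Ioi τ) by rw [Ici, Ioi]; ext s; simp [le_iff_lt_or_eq, or_comm, eq_comm],
        nhdsWithin_insert]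
    rw [hnhds, eventually_sup, eventually_sup]
    refine ⟨?_, ?_, ?_⟩
    · have : ∀ᶠ s in 𝓝[<] τ, |x s| ≤ |l| + 1 :=
        hl.abs.eventually (eventually_le_nhds (by linarith [abs_nonneg l] : |l| < |l| + 1))
      exact this.mono fun s hs => le_max_of_le_left hs
    · simp only [eventually_pure]
      exact le_max_of_le_right (by linarith [abs_nonneg (x τ)])
    · have : ∀ᶠ s in 𝓝[>] τ, |x s| ≤ |x τ| + 1 :=
        (hx.1 τ).abs.eventually (eventually_le_nhds (by linarith [abs_nonneg (x τ)]))
      exact this.mono fun s hs => le_max_of_le_right hs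
  choose M hM using hloc
  obtain ⟨t, -, ht⟩ := isCompact_univ.elim_nhds_subcover (fun τ => {s | |x s| ≤ M τ})
    (fun τ _ => hM τ)
  have htne : t.Nonempty := by
    rcases Set.mem_iUnion₂.1 (ht (mem_univ (0 : I))) with ⟨τ, hτ, -⟩
    exact ⟨τ, hτ⟩
  refine ⟨t.sup' htne M, fun s => ?_⟩
  rcases Set.mem_iUnion₂.1 (ht (mem_univ s)) with ⟨τ, hτt, hτ⟩
  exact le_trans hτ (Finset.le_sup' M hτt)

lemma neBot_Iio_of_ne_zero {τ : I} (h : τ ≠ 0) : Filter.NeBot (𝓝[<] τ) :=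
  nhdsWithin_Iio_self_neBot' ⟨0, mem_Iio.mpr (unitInterval.pos_iff_ne_zero.mpr h)⟩

lemma tendsto_leftLim_of_cadlag (x : I → ℝ) (hx : Cadlag x) {τ : I} (h : τ ≠ 0) :
    Tendsto x (𝓝[<] τ) (𝓝 (Function.leftLim x τ)) := by
  have := neBot_Iio_of_ne_zero h
  obtain ⟨l, hl⟩ := hx.2 τ
  rwa [leftLim_eq_of_tendsto hl]

/-- the first extremal positive trimming ("trim as you go") operator
`T^{(1,+)}_{rim} = id - S_{+Δ}` is `3`-Lipschitz in the sup norm. -/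
theorem stmt5 (x y : I → ℝ) (hx : Cadlag x) (hy : Cadlag y) :
    dNorm (fun τ => trimPos x τ - trimPos y τ) ≤ 3 * dNorm (fun τ => x τ - y τ) := by
  obtain ⟨Mx, hMx⟩ := cadlag_bounded x hx
  obtain ⟨My, hMy⟩ := cadlag_bounded y hy
  set D := dNorm (fun τ => x τ - y τ) with hDdef
  have hbdd : BddAbove (Set.range fun τ : I => |x τ - y τ|) := by
    refine ⟨Mx + My, ?_⟩
    rintro - ⟨τ, rfl⟩
    calc |x τ - y τ| ≤ |x τ| + |y τ| := abs_sub _ _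
      _ ≤ Mx + My := add_le_add (hMx τ) (hMy τ)
  have hpt : ∀ τ : I, |x τ - y τ| ≤ D := fun τ => le_ciSup hbdd τ
  have hD0 : 0 ≤ D := le_trans (abs_nonneg _) (hpt 0)
  -- bound on the jump differences
  have hjump : ∀ τ : I, |jump x τ - jump y τ| ≤ 2 * D := by
    intro τ
    by_cases h0 : τ = 0
    · simp [jump, h0, hD0, mul_nonneg]
    · have := neBot_Iio_of_ne_zero h0
      have hll : |Function.leftLim x τ - Function.leftLim y τ| ≤ D := by
        have htend : Tendsto (fun s => |x s - y s|) (𝓝[<] τ)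
            (𝓝 |Function.leftLim x τ - Function.leftLim y τ|) :=
          ((tendsto_leftLim_of_cadlag x hx h0).sub (tendsto_leftLim_of_cadlag y hy h0)).abs
        exact le_of_tendsto htend (Eventually.of_forall fun s => hpt s)
      have : jump x τ - jump y τ =
          (x τ - y τ) - (Function.leftLim x τ - Function.leftLim y τ) := by
        simp [jump, h0]; ring
      rw [this]
      calc |(x τ - y τ) - (Function.leftLim x τ - Function.leftLim y τ)|
          ≤ |x τ - y τ| + |Function.leftLim x τ - Function.leftLim y τ| := abs_sub _ _
        _ ≤ D + D := add_le_add (hpt τ) hll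
        _ = 2 * D := by ring
  -- the jumps of x are uniformly bounded
  have hjx : ∀ τ : I, |jump x τ| ≤ 2 * Mx := by
    intro τ
    have hMx0 : 0 ≤ Mx := le_trans (abs_nonneg _) (hMx 0)
    by_cases h0 : τ = 0
    · simp [jump, h0]; linarith
    · have := neBot_Iio_of_ne_zero h0
      have hllx : |Function.leftLim x τ| ≤ Mx :=
        le_of_tendsto (tendsto_leftLim_of_cadlag x hx h0).abs
          (Eventually.of_forall fun s => hMx s)
      simp only [jump, h0, if_neg h0]
      calc |x τ - Function.leftLim x τ| ≤ |x τ| + |Function.leftLim x τ| := abs_sub _ _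
        _ ≤ 2 * Mx := by linarith [hMx τ]
  have hjy : ∀ τ : I, |jump y τ| ≤ 2 * My := by
    intro τ
    have hMy0 : 0 ≤ My := le_trans (abs_nonneg _) (hMy 0)
    by_cases h0 : τ = 0
    · simp [jump, h0]; linarith
    · have := neBot_Iio_of_ne_zero h0
      have hlly : |Function.leftLim y τ| ≤ My :=
        le_of_tendsto (tendsto_leftLim_of_cadlag y hy h0).abs
          (Eventually.of_forall fun s => hMy s)
      simp only [jump, h0, if_neg h0]
      calc |y τ - Function.leftLim y τ| ≤ |y τ| + |Function.leftLim y τ| := abs_sub _ _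
        _ ≤ 2 * My := by linarith [hMy τ]
  -- bound on the running-sup differences
  have hsup : ∀ τ : I, |posJumpSup x τ - posJumpSup y τ| ≤ 2 * D := by
    intro τ
    have hne : ∀ z : I → ℝ, (jump z '' {s : I | s ≤ τ}).Nonempty :=
      fun z => ⟨jump z 0, ⟨0, nonneg', rfl⟩⟩
    have hbx : BddAbove (jump x '' {s : I | s ≤ τ}) := by
      refine ⟨2 * Mx, ?_⟩; rintro - ⟨s, -, rfl⟩; exact le_trans (le_abs_self _) (hjx s)
    have hby : BddAbove (jump y '' {s : I | s ≤ τ}) := by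
      refine ⟨2 * My, ?_⟩; rintro - ⟨s, -, rfl⟩; exact le_trans (le_abs_self _) (hjy s)
    rw [abs_sub_le_iff]
    constructor
    · rw [sub_le_iff_le_add]
      refine csSup_le (hne x) ?_
      rintro - ⟨s, hs, rfl⟩
      have h1 : jump x s ≤ jump y s + 2 * D := by
        have := abs_le.1 (hjump s); linarith [this.2]
      exact le_trans h1 (by
        have : jump y s ≤ posJumpSup y τ := le_csSup hby ⟨s, hs, rfl⟩
        linarith)
    · rw [sub_le_iff_le_add]
      refine csSup_le (hne y) ?_
      rintro - ⟨s, hs, rfl⟩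
      have h1 : jump y s ≤ jump x s + 2 * D := by
        have := abs_le.1 (hjump s); linarith [this.1]
      exact le_trans h1 (by
        have : jump x s ≤ posJumpSup x τ := le_csSup hbx ⟨s, hs, rfl⟩
        linarith)
  refine Real.iSup_le (fun τ => ?_) (by linarith)
  show |trimPos x τ - trimPos y τ| ≤ 3 * D
  have : trimPos x τ - trimPos y τ = (x τ - y τ) - (posJumpSup x τ - posJumpSup y τ) := by
    simp [trimPos]; ring
  rw [this]
  calc |(x τ - y τ) - (posJumpSup x τ - posJumpSup y τ)|
      ≤ |x τ - y τ| + |posJumpSup x τ - posJumpSup y τ| := abs_sub _ _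
    _ ≤ D + 2 * D := add_le_add (hpt τ) (hsup τ)
    _ = 3 * D := by ring

end
end

section
/- Let x ∈ 𝔻 with #A⁺₁(x) ≤ 1, i.e. the set A⁺₁(x) of times of the largest positive jump of x on (0,1] has at most one element. Then the record time trimmer R_trim is jointly J1-continuous at x: for every sequence x_n ∈ 𝔻 converging to x in the J1-topology there exist λ_n ∈ Λ such that simultaneously ‖λ_n − I‖ → 0, ‖x_n ∘ λ_n − x‖ → 0 and ‖R_trim(x_n) ∘ λ_n − R_trim(x)‖ → 0. -/
open Filter Topology Set unitInterval

noncomputable section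

open scoped Classical

/-! ### Auxiliary lemmas -/

section Aux

lemma dNorm_nonneg' (x : I → ℝ) : 0 ≤ dNorm x := Real.iSup_nonneg fun t => abs_nonneg _

lemma dNorm_le' {x : I → ℝ} {C : ℝ} (h : ∀ t, |x t| ≤ C) : dNorm x ≤ C := ciSup_le h

lemma abs_le_dNorm {x : I → ℝ} (hb : BddAbove (Set.range fun t => |x t|)) (t : I) :
    |x t| ≤ dNorm x := le_ciSup hb t

lemma neBot_Iio {a : I} (ha : a ≠ 0) : (𝓝[<] a).NeBot :=
  nhdsWithin_Iio_self_neBot' ⟨0, ha.symm.lt_of_le a.2.1⟩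

lemma tendsto_leftLim {x : I → ℝ} (hx : Cadlag x) {a : I} (ha : a ≠ 0) :
    Tendsto x (𝓝[<] a) (𝓝 (Function.leftLim x a)) := by
  obtain ⟨L, hL⟩ := hx.2 a
  have : (𝓝[<] a).NeBot := neBot_Iio ha
  rwa [leftLim_eq_of_tendsto hL]

lemma cadlag_bdd {x : I → ℝ} (hx : Cadlag x) : ∃ C, 0 ≤ C ∧ ∀ t, |x t| ≤ C := by
  have key : ∀ a : I, ∃ C : ℝ, 0 ≤ C ∧ ∃ U ∈ 𝓝 a, ∀ s ∈ U, |x s| ≤ C := by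
    intro a
    obtain ⟨L, hL⟩ := hx.2 a
    set C : ℝ := max (|x a| + 1) (|L| + 1) with hC
    have hC0 : (0:ℝ) ≤ C := le_trans (by positivity) (le_max_left _ _)
    have hCa : |x a| < C := lt_of_lt_of_le (lt_add_one _) (le_max_left _ _)
    have hCL : ∀ᶠ y in 𝓝 L, |y| ≤ C := by
      have : {y : ℝ | |y| < |L| + 1} ∈ 𝓝 L := by
        apply IsOpen.mem_nhds (isOpen_lt continuous_abs continuous_const)
        simp [lt_add_one]
      filter_upwards [this] with y hy using le_trans hy.le (le_max_right _ _)
    have hCxa : ∀ᶠ y in 𝓝 (x a), |y| ≤ C := by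
      have : {y : ℝ | |y| < C} ∈ 𝓝 (x a) :=
        IsOpen.mem_nhds (isOpen_lt continuous_abs continuous_const) hCa
      filter_upwards [this] with y hy using hy.le
    have h1 : ∀ᶠ s in 𝓝[<] a, |x s| ≤ C := hL.eventually hCL
    have h2 : ∀ᶠ s in 𝓝[>] a, |x s| ≤ C := (hx.1 a).eventually hCxa
    have h3 : ∀ᶠ s in 𝓝[{a}] a, |x s| ≤ C := by
      rw [nhdsWithin_singleton, eventually_pure]; exact hCa.le
    have : ∀ᶠ s in 𝓝 a, |x s| ≤ C := by
      rw [← nhdsLT_sup_nhdsGE a, ← nhdsGT_sup_nhdsWithin_singleton a,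
        eventually_sup, eventually_sup]
      exact ⟨h1, h2, h3⟩
    exact ⟨C, hC0, this.exists_mem⟩
  choose C hC0 U hU hUC using key
  obtain ⟨F, -, hF⟩ := isCompact_univ.elim_nhds_subcover U (fun a _ => hU a)
  refine ⟨∑ a ∈ F, C a, Finset.sum_nonneg fun a _ => hC0 a, fun t => ?_⟩
  obtain ⟨a, haF, hta⟩ := Set.mem_iUnion₂.1 (hF (Set.mem_univ t))
  exact le_trans (hUC a t hta) (Finset.single_le_sum (fun b _ => hC0 b) haF)

lemma timeChange_surjective {l : I → I} (hl : IsTimeChange l) : Function.Surjective l := by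
  intro b
  have h01 : (0:I) ≤ 1 := b.2.1.trans (le_one b)
  have := intermediate_value_Icc h01 hl.1.continuousOn
  rw [hl.2.2.1, hl.2.2.2] at this
  obtain ⟨t, -, ht⟩ := this ⟨b.2.1, le_one b⟩
  exact ⟨t, ht⟩

def timeChangeIso {l : I → I} (hl : IsTimeChange l) : I ≃o I :=
  StrictMono.orderIsoOfSurjective l hl.2.1 (timeChange_surjective hl)

lemma timeChangeIso_coe {l : I → I} (hl : IsTimeChange l) : ⇑(timeChangeIso hl) = l := rfl

lemma map_nhdsWithin_Iio {l : I → I} (hl : IsTimeChange l) (a : I) :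
    Filter.map l (𝓝[<] a) = 𝓝[<] (l a) := by
  have h := (timeChangeIso hl).toHomeomorph.isEmbedding.map_nhdsWithin_eq (Set.Iio a) a
  have him : (timeChangeIso hl).toHomeomorph '' Set.Iio a = Set.Iio (l a) := by
    rw [show ⇑(timeChangeIso hl).toHomeomorph = ⇑(timeChangeIso hl) from rfl,
      (timeChangeIso hl).image_Iio, timeChangeIso_coe]
  rw [him] at h
  exact h

lemma timeChange_eq_zero_iff {l : I → I} (hl : IsTimeChange l) {s : I} : l s = 0 ↔ s = 0 := by
  constructor
  · intro h; by_contra hs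
    have : l 0 < l s := hl.2.1 (lt_of_le_of_ne s.2.1 (Ne.symm hs))
    rw [hl.2.2.1, h] at this; exact lt_irrefl _ this
  · rintro rfl; exact hl.2.2.1

lemma tendsto_timeChange_Iio {l : I → I} (hl : IsTimeChange l) (a : I) :
    Tendsto l (𝓝[<] a) (𝓝[<] (l a)) := (map_nhdsWithin_Iio hl a).le

lemma abs_leftLim_le {g : I → ℝ} {C : ℝ} {s : I} (hs : s ≠ 0) {L : ℝ}
    (hg : Tendsto g (𝓝[<] s) (𝓝 L)) (hb : ∀ t, |g t| ≤ C) : |L| ≤ C := by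
  have : (𝓝[<] s).NeBot := neBot_Iio hs
  exact le_of_tendsto hg.abs (Eventually.of_forall hb)

lemma jump_zero (x : I → ℝ) : jump x 0 = 0 := by simp [jump]

lemma jump_close {x z : I → ℝ} (hx : Cadlag x) (hz : Cadlag z) {l : I → I}
    (hl : IsTimeChange l) {C : ℝ} (hb : ∀ t, |z (l t) - x t| ≤ C) (s : I) :
    |jump z (l s) - jump x s| ≤ 2 * C := by
  have hC0 : 0 ≤ C := le_trans (abs_nonneg _) (hb 0)
  by_cases hs : s = 0
  · subst hs; rw [hl.2.2.1]; simp [jump]; linarith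
  · have hls : l s ≠ 0 := fun h => hs ((timeChange_eq_zero_iff hl).1 h)
    have h1 : Tendsto (fun t => z (l t)) (𝓝[<] s) (𝓝 (Function.leftLim z (l s))) :=
      (tendsto_leftLim hz hls).comp (tendsto_timeChange_Iio hl s)
    have h2 : Tendsto x (𝓝[<] s) (𝓝 (Function.leftLim x s)) := tendsto_leftLim hx hs
    have hL : |Function.leftLim z (l s) - Function.leftLim x s| ≤ C :=
      abs_leftLim_le hs (h1.sub h2) hb
    have hpt : |z (l s) - x s| ≤ C := hb s
    rw [jump, jump, if_neg hs, if_neg hls]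
    have heq : z (l s) - Function.leftLim z (l s) - (x s - Function.leftLim x s)
        = (z (l s) - x s) - (Function.leftLim z (l s) - Function.leftLim x s) := by ring
    rw [heq]
    calc |(z (l s) - x s) - (Function.leftLim z (l s) - Function.leftLim x s)|
        ≤ |z (l s) - x s| + |Function.leftLim z (l s) - Function.leftLim x s| := abs_sub _ _
      _ ≤ C + C := add_le_add hpt hL
      _ = 2 * C := by ring

lemma Iio_zero' : Set.Iio (0:I) = ∅ := by
  ext t; simp only [Set.mem_Iio, Set.mem_empty_iff_false, iff_false, not_lt]; exact t.2.1

lemma Ioi_one' : Set.Ioi (1:I) = ∅ := by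
  ext t; simp only [Set.mem_Ioi, Set.mem_empty_iff_false, iff_false, not_lt]; exact le_one t

lemma jump_small_left {x : I → ℝ} (hx : Cadlag x) (a : I) {ε : ℝ} (hε : 0 < ε) :
    ∀ᶠ s in 𝓝[<] a, |jump x s| ≤ ε := by
  by_cases ha : a = 0
  · subst ha; rw [nhdsWithin, Iio_zero']; simp
  · have ha0 : (0:I) < a := lt_of_le_of_ne a.2.1 (Ne.symm ha)
    obtain ⟨L, hL⟩ := hx.2 a
    have hV : ∀ᶠ t in 𝓝[<] a, |x t - L| ≤ ε/2 :=
      hL.eventually (p := fun y => |y - L| ≤ ε/2)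
        (by filter_upwards [eventually_abs_sub_lt L (half_pos hε)] with y hy using hy.le)
    obtain ⟨b, hb, hbV⟩ := (mem_nhdsLT_iff_exists_Ioo_subset' ha0).1 hV
    filter_upwards [Ioo_mem_nhdsLT hb] with s hs
    by_cases hs0 : s = 0
    · simp [jump, hs0]; linarith
    · have hxs : |x s - L| ≤ ε/2 := hbV hs
      have hll : |Function.leftLim x s - L| ≤ ε/2 := by
        have hne : (𝓝[<] s).NeBot := neBot_Iio hs0
        refine le_of_tendsto (((tendsto_leftLim hx hs0).sub_const L).abs) ?_
        filter_upwards [Ioo_mem_nhdsLT hs.1] with t ht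
        exact hbV ⟨ht.1, ht.2.trans hs.2⟩
      rw [jump, if_neg hs0]
      calc |x s - Function.leftLim x s|
          ≤ |x s - L| + |Function.leftLim x s - L| :=
            abs_sub_comm L (Function.leftLim x s) ▸ abs_sub_le _ L _
        _ ≤ ε := by linarith

lemma jump_small_right {x : I → ℝ} (hx : Cadlag x) (a : I) {ε : ℝ} (hε : 0 < ε) :
    ∀ᶠ s in 𝓝[>] a, |jump x s| ≤ ε := by
  by_cases ha : a = 1
  · subst ha; rw [nhdsWithin, Ioi_one']; simp
  · have ha1 : a < 1 := lt_of_le_of_ne (le_one a) ha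
    have hV : ∀ᶠ t in 𝓝[>] a, |x t - x a| ≤ ε/2 :=
      (hx.1 a).eventually (p := fun y => |y - x a| ≤ ε/2)
        (by filter_upwards [eventually_abs_sub_lt (x a) (half_pos hε)] with y hy using hy.le)
    obtain ⟨b, hb, hbV⟩ := (mem_nhdsGT_iff_exists_Ioo_subset' ha1).1 hV
    filter_upwards [Ioo_mem_nhdsGT hb] with s hs
    have hs0 : s ≠ 0 := fun h => (h ▸ hs.1).not_ge a.2.1
    have hxs : |x s - x a| ≤ ε/2 := hbV hs
    have hll : |Function.leftLim x s - x a| ≤ ε/2 := by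
      have hne : (𝓝[<] s).NeBot := neBot_Iio hs0
      refine le_of_tendsto (((tendsto_leftLim hx hs0).sub_const (x a)).abs) ?_
      filter_upwards [Ioo_mem_nhdsLT hs.1] with t ht
      exact hbV ⟨ht.1, ht.2.trans hs.2⟩
    rw [jump, if_neg hs0]
    calc |x s - Function.leftLim x s|
        ≤ |x s - x a| + |Function.leftLim x s - x a| :=
          abs_sub_comm (x a) (Function.leftLim x s) ▸ abs_sub_le _ (x a) _
      _ ≤ ε := by linarith

lemma finite_big_jumps {x : I → ℝ} (hx : Cadlag x) {c : ℝ} (hc : 0 < c) :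
    {s : I | c ≤ |jump x s|}.Finite := by
  have key : ∀ a : I, ∃ U : Set I, U ∈ 𝓝 a ∧ ∀ s ∈ U, s ≠ a → |jump x s| ≤ c/2 := by
    intro a
    have h : ∀ᶠ s in 𝓝[≠] a, |jump x s| ≤ c/2 := by
      rw [← nhdsLT_sup_nhdsGT a, eventually_sup]
      exact ⟨jump_small_left hx a (half_pos hc), jump_small_right hx a (half_pos hc)⟩
    obtain ⟨u, hu_open, hau, huP⟩ := mem_nhdsWithin.1 h
    exact ⟨u, hu_open.mem_nhds hau, fun s hsu hsa => huP ⟨hsu, hsa⟩⟩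
  choose U hU hUP using key
  obtain ⟨F, -, hF⟩ := isCompact_univ.elim_nhds_subcover U (fun a _ => hU a)
  apply Set.Finite.subset F.finite_toSet
  intro s hs
  obtain ⟨a, haF, hsa⟩ := Set.mem_iUnion₂.1 (hF (Set.mem_univ s))
  by_cases h : s = a
  · exact h ▸ haF
  · exact absurd (le_trans hs (hUP a s hsa h)) (by linarith)

lemma setIle_one : {s : I | s ≤ 1} = Set.univ := by
  ext t; simpa using le_one' (t := t)

lemma posJumpSup_one (x : I → ℝ) : posJumpSup x 1 = sSup (Set.range (jump x)) := by
  rw [posJumpSup, setIle_one, Set.image_univ]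

lemma jump_abs_le {x : I → ℝ} (hx : Cadlag x) {C : ℝ} (hC : 0 ≤ C) (hb : ∀ t, |x t| ≤ C)
    (s : I) : |jump x s| ≤ 2 * C := by
  by_cases hs : s = 0
  · simp [hs, jump]; linarith
  · have hL : |Function.leftLim x s| ≤ C := abs_leftLim_le hs (tendsto_leftLim hx hs) hb
    rw [jump, if_neg hs]
    calc |x s - Function.leftLim x s| ≤ |x s| + |Function.leftLim x s| := abs_sub _ _
      _ ≤ 2 * C := by linarith [hb s]

lemma bddAbove_range_jump {x : I → ℝ} (hx : Cadlag x) : BddAbove (Set.range (jump x)) := by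
  obtain ⟨C, hC0, hC⟩ := cadlag_bdd hx
  exact ⟨2*C, by rintro v ⟨s, rfl⟩; exact le_trans (le_abs_self _) (jump_abs_le hx hC0 hC s)⟩

lemma jump_le_posJumpSup {x : I → ℝ} (hx : Cadlag x) (s : I) :
    jump x s ≤ posJumpSup x 1 := by
  rw [posJumpSup_one]; exact le_csSup (bddAbove_range_jump hx) ⟨s, rfl⟩

lemma posJumpSup_nonneg {x : I → ℝ} (hx : Cadlag x) : 0 ≤ posJumpSup x 1 := by
  have := jump_le_posJumpSup hx 0; rwa [jump_zero] at this

lemma exists_jump_eq {x : I → ℝ} (hx : Cadlag x) (hM : 0 < posJumpSup x 1) :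
    ∃ t0 : I, jump x t0 = posJumpSup x 1 := by
  have hS : {s : I | posJumpSup x 1 / 2 ≤ |jump x s|}.Finite := finite_big_jumps hx (by linarith)
  have hne : ∃ s1, posJumpSup x 1 / 2 < jump x s1 := by
    have h2 : posJumpSup x 1 / 2 < sSup (Set.range (jump x)) := by
      rw [← posJumpSup_one]; linarith
    obtain ⟨v, ⟨s1, rfl⟩, hv⟩ := exists_lt_of_lt_csSup (⟨jump x 0, ⟨0, rfl⟩⟩ : (Set.range (jump x)).Nonempty) h2
    exact ⟨s1, hv⟩
  obtain ⟨s1, hs1⟩ := hne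
  have hs1S : s1 ∈ hS.toFinset := by
    rw [Set.Finite.mem_toFinset]
    exact hs1.le.trans (le_abs_self _)
  obtain ⟨t0, ht0S, ht0⟩ := Finset.exists_mem_eq_sup' ⟨s1, hs1S⟩ (jump x)
  refine ⟨t0, le_antisymm (jump_le_posJumpSup hx t0) ?_⟩
  rw [posJumpSup_one]
  apply csSup_le (⟨jump x 0, ⟨0, rfl⟩⟩ : (Set.range (jump x)).Nonempty)
  rintro v ⟨s, rfl⟩
  by_cases hsS : s ∈ hS.toFinset
  · rw [← ht0]
    exact Finset.le_sup' (jump x) hsS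
  · have h1 : ¬ (posJumpSup x 1 / 2 ≤ |jump x s|) := by
      rwa [Set.Finite.mem_toFinset] at hsS
    have h2 : jump x s < posJumpSup x 1 / 2 := lt_of_le_of_lt (le_abs_self _) (not_le.1 h1)
    have h3 : jump x s1 ≤ jump x t0 := ht0 ▸ Finset.le_sup' (jump x) hs1S
    linarith

end Aux

/-- if `#A⁺₁(x) ≤ 1` then the record time trimmer `R_trim` is jointly
`J₁`-continuous at `x`. -/
theorem stmt10 (x : I → ℝ) (hx : Cadlag x) (hA : (posA x 1).Subsingleton)
    (xn : ℕ → I → ℝ) (hxn : ∀ n, Cadlag (xn n)) (hJ1 : J1Tendsto xn x) :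
    ∃ l : ℕ → I → I, (∀ n, IsTimeChange (l n)) ∧
      Tendsto (fun n => dNorm (fun τ => (l n τ : ℝ) - (τ : ℝ))) atTop (𝓝 0) ∧
      Tendsto (fun n => dNorm (fun τ => xn n (l n τ) - x τ)) atTop (𝓝 0) ∧
      Tendsto (fun n => dNorm (fun τ => recordTrim (xn n) (l n τ) - recordTrim x τ))
        atTop (𝓝 0) := by
  obtain ⟨l, hlTC, hlI, hlx⟩ := hJ1
  refine ⟨l, hlTC, hlI, hlx, ?_⟩
  set ε : ℕ → ℝ := fun n => dNorm (fun τ => xn n (l n τ) - x τ) with hεdef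
  obtain ⟨Cx, hCx0, hCx⟩ := cadlag_bdd hx
  have hbn : ∀ n τ, |xn n (l n τ) - x τ| ≤ ε n := by
    intro n τ
    obtain ⟨Cn, hCn0, hCn⟩ := cadlag_bdd (hxn n)
    show |xn n (l n τ) - x τ| ≤ dNorm (fun τ => xn n (l n τ) - x τ)
    refine @abs_le_dNorm (fun u => xn n (l n u) - x u) ⟨Cn + Cx, ?_⟩ τ
    rintro v ⟨t, rfl⟩
    exact le_trans (abs_sub _ _) (add_le_add (hCn _) (hCx _))
  have hεn0 : ∀ n, 0 ≤ ε n := fun n => dNorm_nonneg' _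
  have hjc : ∀ n s, |jump (xn n) (l n s) - jump x s| ≤ 2 * ε n :=
    fun n s => jump_close hx (hxn n) (hlTC n) (hbn n) s
  have hsurj : ∀ n (s' : I), ∃ s, l n s = s' := fun n => timeChange_surjective (hlTC n)
  have hjle : ∀ n (s' : I), jump (xn n) s' ≤ posJumpSup x 1 + 2 * ε n := by
    intro n s'
    obtain ⟨s, rfl⟩ := hsurj n s'
    have h1 := (abs_le.1 (hjc n s)).2
    have h2 := jump_le_posJumpSup hx s
    linarith
  have h3ε : Tendsto (fun n => 3 * ε n) atTop (𝓝 0) := by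
    simpa using hlx.const_mul 3
  rcases eq_or_lt_of_le (posJumpSup_nonneg hx) with hM0 | hMpos
  · -- Case: no positive jump
    have hAx : posA x 1 = ∅ := by
      ext s
      simp only [posA, Set.mem_setOf_eq, Set.mem_empty_iff_false, iff_false, not_and]
      intro _ _ hpos heq
      rw [heq, ← hM0] at hpos
      exact lt_irrefl _ hpos
    have hrx : ∀ τ, recordTrim x τ = x τ := by
      intro τ; rw [recordTrim, if_neg]
      rintro ⟨hne, -⟩
      rw [hAx] at hne
      exact Set.not_nonempty_empty hne
    have hbound : ∀ n τ, |recordTrim (xn n) (l n τ) - recordTrim x τ| ≤ 3 * ε n := by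
      intro n τ
      rw [hrx τ, recordTrim]
      by_cases hcond : (posA (xn n) 1).Nonempty ∧ sInf (posA (xn n) 1) ≤ l n τ
      · rw [if_pos hcond]
        obtain ⟨u, hu⟩ := hcond.1
        have hMn_pos : 0 < posJumpSup (xn n) 1 := hu.2.2.2 ▸ hu.2.2.1
        have hfin : (posA (xn n) 1).Finite := by
          apply (finite_big_jumps (hxn n) hMn_pos).subset
          rintro s ⟨-, -, hpos, heq⟩
          rw [Set.mem_setOf_eq, ← heq]
          exact le_abs_self _
        have hmem : sInf (posA (xn n) 1) ∈ posA (xn n) 1 := hcond.1.csInf_mem hfin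
        have hMn_le : posJumpSup (xn n) 1 ≤ 2 * ε n := by
          rw [posJumpSup_one]
          apply csSup_le (⟨jump (xn n) 0, ⟨0, rfl⟩⟩ : (Set.range (jump (xn n))).Nonempty)
          rintro v ⟨s', rfl⟩
          have := hjle n s'
          linarith [hM0.symm ▸ this]
        have hkey : xn n (l n τ) - jump (xn n) (sInf (posA (xn n) 1)) - x τ
            = (xn n (l n τ) - x τ) - jump (xn n) (sInf (posA (xn n) 1)) := by ring
        rw [hkey]
        calc |(xn n (l n τ) - x τ) - jump (xn n) (sInf (posA (xn n) 1))|
            ≤ |xn n (l n τ) - x τ| + |jump (xn n) (sInf (posA (xn n) 1))| := abs_sub _ _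
          _ ≤ ε n + 2 * ε n := by
              refine add_le_add (hbn n τ) ?_
              rw [abs_of_pos hmem.2.2.1, hmem.2.2.2]
              exact hMn_le
          _ = 3 * ε n := by ring
      · rw [if_neg hcond]
        exact (hbn n τ).trans (by linarith [hεn0 n])
    exact squeeze_zero' (Eventually.of_forall fun n => dNorm_nonneg' _)
      (Eventually.of_forall fun n => dNorm_le' (hbound n)) h3ε
  · -- Case: unique positive maximal jump at t0
    obtain ⟨t0, ht0⟩ := exists_jump_eq hx hMpos
    have ht00 : t0 ≠ 0 := by
      intro h; rw [h, jump_zero] at ht0; linarith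
    have ht0pos : 0 < t0 := lt_of_le_of_ne t0.2.1 (Ne.symm ht00)
    have ht0A : t0 ∈ posA x 1 := ⟨ht0pos, le_one t0, by rw [ht0]; exact hMpos, ht0⟩
    have hposAx : posA x 1 = {t0} := hA.eq_singleton_of_mem ht0A
    have hS : {s : I | posJumpSup x 1 / 2 ≤ |jump x s|}.Finite :=
      finite_big_jumps hx (by linarith)
    set T : Finset I := hS.toFinset.erase t0 with hT
    have hTlt : ∀ s ∈ T, jump x s < posJumpSup x 1 := by
      intro s hsT
      rcases Finset.mem_erase.1 hsT with ⟨hst0, -⟩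
      rcases lt_or_eq_of_le (jump_le_posJumpSup hx s) with h | h
      · exact h
      · exfalso; apply hst0
        have hs0 : s ≠ 0 := by intro h0; rw [h0, jump_zero] at h; linarith
        have hmem : s ∈ posA x 1 :=
          ⟨lt_of_le_of_ne s.2.1 (Ne.symm hs0), le_one s, by rw [h]; exact hMpos, h⟩
        rw [hposAx] at hmem
        exact hmem
    set sstar : ℝ := if hTne : T.Nonempty then
        max (posJumpSup x 1 / 2) (T.sup' hTne (jump x)) else posJumpSup x 1 / 2 with hsstar
    have hstar_lt : sstar < posJumpSup x 1 := by
      rw [hsstar]; split_ifs with hTne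
      · exact max_lt (by linarith) ((Finset.sup'_lt_iff hTne).2 hTlt)
      · linarith
    have hstar_half : posJumpSup x 1 / 2 ≤ sstar := by
      rw [hsstar]; split_ifs
      exacts [le_max_left _ _, le_refl _]
    have hstar_ge : ∀ s, s ≠ t0 → jump x s ≤ sstar := by
      intro s hs
      by_cases hsS : s ∈ hS.toFinset
      · have hsT : s ∈ T := Finset.mem_erase.2 ⟨hs, hsS⟩
        rw [hsstar, dif_pos ⟨s, hsT⟩]
        exact le_max_of_le_right (Finset.le_sup' (jump x) hsT)
      · have h1 : ¬ (posJumpSup x 1 / 2 ≤ |jump x s|) := by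
          rwa [Set.Finite.mem_toFinset] at hsS
        have h2 : jump x s < posJumpSup x 1 / 2 :=
          lt_of_le_of_lt (le_abs_self _) (not_le.1 h1)
        linarith
    have hev : ∀ᶠ n in atTop,
        ε n < min (posJumpSup x 1 / 4) ((posJumpSup x 1 - sstar) / 8) :=
      hlx.eventually (gt_mem_nhds (lt_min (by linarith) (by linarith)))
    refine squeeze_zero' (Eventually.of_forall fun n => dNorm_nonneg' _) ?_ h3ε
    filter_upwards [hev] with n hn
    rcases lt_min_iff.1 hn with ⟨hn1, hn2⟩
    have hjt0 := abs_le.1 (hjc n t0)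
    rw [ht0] at hjt0
    have hjt0pos : 0 < jump (xn n) (l n t0) := by linarith [hjt0.1]
    have hlt : ∀ s' : I, s' ≠ l n t0 → jump (xn n) s' < jump (xn n) (l n t0) := by
      intro s' hs'
      obtain ⟨s, rfl⟩ := hsurj n s'
      have hst0 : s ≠ t0 := fun h => hs' (by rw [h])
      have h1 := (abs_le.1 (hjc n s)).2
      have h2 := hstar_ge s hst0
      linarith [hjt0.1]
    have hbdd : ∀ v ∈ Set.range (jump (xn n)), v ≤ jump (xn n) (l n t0) := by
      rintro v ⟨s', rfl⟩
      by_cases h : s' = l n t0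
      · rw [h]
      · exact (hlt s' h).le
    have hMn : posJumpSup (xn n) 1 = jump (xn n) (l n t0) := by
      rw [posJumpSup_one]
      exact le_antisymm (csSup_le (⟨jump (xn n) 0, ⟨0, rfl⟩⟩ : (Set.range (jump (xn n))).Nonempty) hbdd)
        (le_csSup ⟨jump (xn n) (l n t0), hbdd⟩ ⟨l n t0, rfl⟩)
    have hlt0ne : l n t0 ≠ 0 := fun h => ht00 ((timeChange_eq_zero_iff (hlTC n)).1 h)
    have hposAn : posA (xn n) 1 = {l n t0} := by
      ext s'
      simp only [posA, Set.mem_setOf_eq, Set.mem_singleton_iff]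
      constructor
      · rintro ⟨-, -, -, heq⟩
        by_contra hne
        rw [hMn] at heq
        exact (hlt s' hne).ne heq
      · rintro rfl
        exact ⟨lt_of_le_of_ne (l n t0).2.1 (Ne.symm hlt0ne), le_one _, hjt0pos, hMn.symm⟩
    apply dNorm_le'
    intro τ
    simp only [recordTrim, hposAn, hposAx, csInf_singleton, Set.singleton_nonempty, true_and]
    by_cases hcond : t0 ≤ τ
    · rw [if_pos (((hlTC n).2.1.le_iff_le).2 hcond), if_pos hcond]
      have hb := hbn n τ
      have hkey : xn n (l n τ) - jump (xn n) (l n t0) - (x τ - jump x t0)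
          = (xn n (l n τ) - x τ) - (jump (xn n) (l n t0) - jump x t0) := by ring
      rw [hkey]
      calc |(xn n (l n τ) - x τ) - (jump (xn n) (l n t0) - jump x t0)|
          ≤ |xn n (l n τ) - x τ| + |jump (xn n) (l n t0) - jump x t0| := abs_sub _ _
        _ ≤ ε n + 2 * ε n := add_le_add hb (hjc n t0)
        _ = 3 * ε n := by ring
    · rw [if_neg (fun h => hcond (((hlTC n).2.1.le_iff_le).1 h)), if_neg hcond]
      exact (hbn n τ).trans (by linarith [hεn0 n])


end
end

section
/- The record time trimmer R_trim is not ‖·‖-continuous on 𝔻: for x := 1_{[1/3,1]} + 1_{[2/3,1]} and x_n := x + (1/n)·1_{[2/3,1]} (n ≥ 1), one has ‖x_n − x‖ = 1/n → 0, while R_trim(x) = 1_{[2/3,1]}, R_trim(x_n) = 1_{[1/3,1]}, and ‖R_trim(x_n) − R_trim(x)‖ = 1 for every n ≥ 1. -/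
open Filter Topology Set unitInterval

noncomputable section

open scoped Classical

def t3 : I := ⟨1/3, by constructor <;> norm_num⟩
def t6 : I := ⟨2/3, by constructor <;> norm_num⟩

lemma t3_coe : (t3 : ℝ) = 1/3 := rfl
lemma t6_coe : (t6 : ℝ) = 2/3 := rfl
lemma t3_le {τ : I} : t3 ≤ τ ↔ (1/3:ℝ) ≤ (τ:ℝ) := Subtype.coe_le_coe.symm
lemma t6_le {τ : I} : t6 ≤ τ ↔ (2/3:ℝ) ≤ (τ:ℝ) := Subtype.coe_le_coe.symm
lemma t3_pos : (0:I) < t3 := by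
  rw [← Subtype.coe_lt_coe]; norm_num [t3]
lemma t6_pos : (0:I) < t6 := by
  rw [← Subtype.coe_lt_coe]; norm_num [t6]

lemma myLeftLim {f : I → ℝ} {s : I} (hs : (0:I) < s) {c : ℝ}
    (h : ∀ᶠ τ in 𝓝[<] s, f τ = c) : Function.leftLim f s = c := by
  have hne : (𝓝[<] s).NeBot := nhdsWithin_Iio_self_neBot' ⟨0, hs⟩
  exact leftLim_eq_of_tendsto (h := hne)
    (Filter.Tendsto.congr' (Filter.EventuallyEq.symm h) tendsto_const_nhds)

lemma jump_step (a b : ℝ) (f : I → ℝ)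
    (hf : ∀ τ : I, f τ = (if (1/3:ℝ) ≤ (τ:ℝ) then a else 0) + (if (2/3:ℝ) ≤ (τ:ℝ) then b else 0))
    (s : I) :
    jump f s = if (s:ℝ) = 1/3 then a else if (s:ℝ) = 2/3 then b else 0 := by
  by_cases hs0 : s = 0
  · subst hs0
    rw [jump, if_pos rfl]
    have : ((0:I):ℝ) = 0 := rfl
    rw [this]; norm_num
  · have hs : (0:I) < s := lt_of_le_of_ne nonneg' (Ne.symm hs0)
    rw [jump, if_neg hs0]
    rcases lt_trichotomy ((s:ℝ)) (1/3) with h1 | h1 | h1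
    · have hev : ∀ᶠ τ in 𝓝[<] s, f τ = 0 := by
        refine eventually_of_mem self_mem_nhdsWithin (fun τ hτ => ?_)
        have hτs : (τ:ℝ) < (s:ℝ) := Subtype.coe_lt_coe.2 hτ
        rw [hf τ, if_neg (by linarith), if_neg (by linarith)]; ring
      rw [myLeftLim hs hev, hf s, if_neg (not_le.2 h1), if_neg (by push_neg; linarith),
        if_neg (ne_of_lt h1), if_neg (by intro h; rw [h] at h1; linarith)]
      ring
    · have hev : ∀ᶠ τ in 𝓝[<] s, f τ = 0 := by
        refine eventually_of_mem self_mem_nhdsWithin (fun τ hτ => ?_)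
        have hτs : (τ:ℝ) < (s:ℝ) := Subtype.coe_lt_coe.2 hτ
        rw [hf τ, if_neg (by linarith), if_neg (by linarith)]; ring
      rw [myLeftLim hs hev, hf s, if_pos (le_of_eq h1.symm), if_neg (by rw [h1]; norm_num),
        if_pos h1]
      ring
    · have ht3s : t3 < s := by rw [← Subtype.coe_lt_coe, t3_coe]; exact h1
      rcases le_or_gt (s:ℝ) (2/3) with h2 | h2
      · have hev : ∀ᶠ τ in 𝓝[<] s, f τ = a := by
          refine eventually_of_mem (Ioo_mem_nhdsLT_of_mem ⟨ht3s, le_refl s⟩) (fun τ hτ => ?_)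
          have hl : (1/3:ℝ) < (τ:ℝ) := Subtype.coe_lt_coe.2 hτ.1
          have hr : (τ:ℝ) < (s:ℝ) := Subtype.coe_lt_coe.2 hτ.2
          rw [hf τ, if_pos (le_of_lt hl), if_neg (by linarith)]; ring
        rcases eq_or_lt_of_le h2 with h2e | h2l
        · rw [myLeftLim hs hev, hf s, if_pos (by linarith), if_pos (le_of_eq h2e.symm),
            if_neg (by linarith), if_pos h2e]
          ring
        · rw [myLeftLim hs hev, hf s, if_pos (by linarith), if_neg (not_le.2 h2l),
            if_neg (by linarith), if_neg (ne_of_lt h2l)]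
          ring
      · have ht6s : t6 < s := by rw [← Subtype.coe_lt_coe, t6_coe]; exact h2
        have hev : ∀ᶠ τ in 𝓝[<] s, f τ = a + b := by
          refine eventually_of_mem (Ioo_mem_nhdsLT_of_mem ⟨ht6s, le_refl s⟩) (fun τ hτ => ?_)
          have hl : (2/3:ℝ) < (τ:ℝ) := Subtype.coe_lt_coe.2 hτ.1
          rw [hf τ, if_pos (by linarith), if_pos (le_of_lt hl)]
        rw [myLeftLim hs hev, hf s, if_pos (by linarith), if_pos (by linarith),
          if_neg (by linarith), if_neg (by linarith)]
        ring

lemma recordTrim_caseA (f : I → ℝ)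
    (hj : ∀ s : I, jump f s = if (s:ℝ) = 1/3 then 1 else if (s:ℝ) = 2/3 then 1 else 0) :
    ∀ τ : I, recordTrim f τ = if (1/3:ℝ) ≤ (τ:ℝ) then f τ - 1 else f τ := by
  have hjt3 : jump f t3 = 1 := by rw [hj, t3_coe]; norm_num
  have hsup : posJumpSup f 1 = 1 := by
    refine IsGreatest.csSup_eq ⟨⟨t3, le_one', hjt3⟩, ?_⟩
    rintro y ⟨s, -, rfl⟩
    rw [hj]; split_ifs <;> norm_num
  have hmem : t3 ∈ posA f 1 := ⟨t3_pos, le_one', by rw [hjt3]; norm_num, by rw [hjt3, hsup]⟩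
  have hinf : sInf (posA f 1) = t3 := by
    refine IsLeast.csInf_eq ⟨hmem, ?_⟩
    rintro s ⟨-, -, hpos, -⟩
    rw [hj] at hpos
    split_ifs at hpos with h h2
    · exact t3_le.2 (le_of_eq h.symm)
    · exact t3_le.2 (by rw [h2]; norm_num)
    · exact absurd hpos (lt_irrefl 0)
  intro τ
  simp only [recordTrim, hinf, hjt3]
  by_cases h : (1/3:ℝ) ≤ (τ:ℝ)
  · rw [if_pos ⟨⟨t3, hmem⟩, t3_le.2 h⟩, if_pos h]
  · rw [if_neg (fun hc => h (t3_le.1 hc.2)), if_neg h]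

lemma recordTrim_caseB (f : I → ℝ) (b : ℝ) (hb : 1 < b)
    (hj : ∀ s : I, jump f s = if (s:ℝ) = 1/3 then 1 else if (s:ℝ) = 2/3 then b else 0) :
    ∀ τ : I, recordTrim f τ = if (2/3:ℝ) ≤ (τ:ℝ) then f τ - b else f τ := by
  have hjt6 : jump f t6 = b := by rw [hj, t6_coe]; norm_num
  have hsup : posJumpSup f 1 = b := by
    refine IsGreatest.csSup_eq ⟨⟨t6, le_one', hjt6⟩, ?_⟩
    rintro y ⟨s, -, rfl⟩
    rw [hj]; split_ifs <;> linarith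
  have hmem : t6 ∈ posA f 1 := ⟨t6_pos, le_one', by rw [hjt6]; linarith, by rw [hjt6, hsup]⟩
  have hinf : sInf (posA f 1) = t6 := by
    refine IsLeast.csInf_eq ⟨hmem, ?_⟩
    rintro s ⟨-, -, hpos, heq⟩
    rw [hsup, hj] at heq
    split_ifs at heq with h h2
    · exact absurd heq (by linarith)
    · exact t6_le.2 (le_of_eq h2.symm)
    · exact absurd heq (by linarith)
  intro τ
  simp only [recordTrim, hinf, hjt6]
  by_cases h : (2/3:ℝ) ≤ (τ:ℝ)
  · rw [if_pos ⟨⟨t6, hmem⟩, t6_le.2 h⟩, if_pos h]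
  · rw [if_neg (fun hc => h (t6_le.1 hc.2)), if_neg h]

lemma dNorm_eq_of (f : I → ℝ) (c : ℝ) (hb : ∀ τ, |f τ| ≤ c) (τ0 : I) (h0 : |f τ0| = c) :
    dNorm f = c := by
  refine le_antisymm (ciSup_le hb) ?_
  rw [← h0]
  exact le_ciSup ⟨c, by rintro y ⟨τ, rfl⟩; exact hb τ⟩ τ0

/-- the record time trimmer `R_trim` is not `‖·‖`-continuous:
with `x = 1_{[1/3,1]} + 1_{[2/3,1]}` and `x_n = x + (1/n)·1_{[2/3,1]}` one has
`‖x_n - x‖ = 1/n → 0` while `R_trim(x) = 1_{[2/3,1]}`, `R_trim(x_n) = 1_{[1/3,1]}`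
and `‖R_trim(x_n) - R_trim(x)‖ = 1` for every `n ≥ 1`. -/
theorem stmt17 (x : I → ℝ) (xn : ℕ → I → ℝ)
    (hxdef : ∀ τ : I, x τ =
      (if (1/3 : ℝ) ≤ (τ : ℝ) then 1 else 0) + (if (2/3 : ℝ) ≤ (τ : ℝ) then 1 else 0))
    (hxndef : ∀ n : ℕ, 1 ≤ n → ∀ τ : I,
      xn n τ = x τ + (1 / (n : ℝ)) * (if (2/3 : ℝ) ≤ (τ : ℝ) then 1 else 0)) :
    (∀ n : ℕ, 1 ≤ n → dNorm (fun τ => xn n τ - x τ) = 1 / (n : ℝ)) ∧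
    Tendsto (fun n => dNorm (fun τ => xn n τ - x τ)) atTop (𝓝 0) ∧
    (∀ τ : I, recordTrim x τ = if (2/3 : ℝ) ≤ (τ : ℝ) then 1 else 0) ∧
    (∀ n : ℕ, 1 ≤ n → ∀ τ : I,
      recordTrim (xn n) τ = if (1/3 : ℝ) ≤ (τ : ℝ) then 1 else 0) ∧
    (∀ n : ℕ, 1 ≤ n → dNorm (fun τ => recordTrim (xn n) τ - recordTrim x τ) = 1) := by
  have hjx : ∀ s : I, jump x s = if (s:ℝ) = 1/3 then 1 else if (s:ℝ) = 2/3 then 1 else 0 :=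
    jump_step 1 1 x hxdef
  have hjxn : ∀ n : ℕ, 1 ≤ n → ∀ s : I,
      jump (xn n) s = if (s:ℝ) = 1/3 then 1 else if (s:ℝ) = 2/3 then 1 + 1/(n:ℝ) else 0 :=
    fun n hn => jump_step 1 (1 + 1/(n:ℝ)) (xn n)
      (fun τ => by rw [hxndef n hn τ, hxdef τ]; split_ifs <;> ring)
  have hinv : ∀ n : ℕ, 1 ≤ n → (0:ℝ) < 1/(n:ℝ) := by
    intro n hn
    have : (1:ℝ) ≤ (n:ℝ) := by exact_mod_cast hn
    positivity
  have part3 : ∀ τ : I, recordTrim x τ = if (2/3 : ℝ) ≤ (τ : ℝ) then 1 else 0 := by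
    intro τ
    rw [recordTrim_caseA x hjx τ, hxdef τ]
    split_ifs <;> ring
  have part4 : ∀ n : ℕ, 1 ≤ n → ∀ τ : I,
      recordTrim (xn n) τ = if (1/3 : ℝ) ≤ (τ : ℝ) then 1 else 0 := by
    intro n hn τ
    rw [recordTrim_caseB (xn n) (1 + 1/(n:ℝ)) (by linarith [hinv n hn]) (hjxn n hn) τ,
      hxndef n hn τ, hxdef τ]
    split_ifs <;> ring
  have part1 : ∀ n : ℕ, 1 ≤ n → dNorm (fun τ => xn n τ - x τ) = 1/(n:ℝ) := by
    intro n hn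
    have hd : ∀ τ : I, xn n τ - x τ = (1/(n:ℝ)) * (if (2/3:ℝ) ≤ (τ:ℝ) then 1 else 0) := by
      intro τ; rw [hxndef n hn τ]; ring
    refine dNorm_eq_of _ _ (fun τ => ?_) 1 ?_
    · rw [hd τ]
      split_ifs
      · rw [mul_one, abs_of_nonneg (le_of_lt (hinv n hn))]
      · rw [mul_zero, abs_zero]; exact le_of_lt (hinv n hn)
    · have hc1 : (((1:I)):ℝ) = 1 := rfl
      rw [hd 1, hc1, if_pos (by norm_num), mul_one, abs_of_nonneg (le_of_lt (hinv n hn))]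
  refine ⟨part1, ?_, part3, part4, ?_⟩
  · have hev : (fun n : ℕ => (1:ℝ)/(n:ℝ)) =ᶠ[atTop] (fun n => dNorm (fun τ => xn n τ - x τ)) := by
      filter_upwards [eventually_ge_atTop 1] with n hn
      exact (part1 n hn).symm
    exact Filter.Tendsto.congr' hev tendsto_one_div_atTop_nhds_zero_nat
  · intro n hn
    have hd : ∀ τ : I, recordTrim (xn n) τ - recordTrim x τ =
        (if (1/3:ℝ) ≤ (τ:ℝ) then 1 else 0) - (if (2/3:ℝ) ≤ (τ:ℝ) then 1 else 0) := by
      intro τ; rw [part4 n hn τ, part3 τ]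
    refine dNorm_eq_of _ _ (fun τ => ?_) t3 ?_
    · rw [hd τ]; split_ifs <;> norm_num
    · rw [hd t3, t3_coe, if_pos le_rfl, if_neg (by norm_num)]
      norm_num


end
end
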